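/- arXiv:2303.04786 — 2 statements merged into one kernel-verified Lean document; each statement's English description precedes it below -/
import Mathlib

section
/- Let d_0, d_1, ..., d_n be positive integers with gcd(d_0,...,d_n) = 1, and for each natural number d let a(d) denote the number of tuples (a_0,...,a_n) of natural numbers with a_0 d_0 + a_1 d_1 + ... + a_n d_n = d. Then a(d)/d^n tends to 1/(n! · d_0 d_1 ⋯ d_n) as d → ∞. -/
open Finset

-- upper pow-difference: (y+e)^(j+1) ≤ y^(j+1) + (j+1)*e*(y+e)^j
lemma pow_add_le' (y e : ℕ) : ∀ j : ℕ, (y+e)^(j+1) ≤ y^(j+1) + (j+1)*e*(y+e)^j := by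
  intro j
  induction j with
  | zero => simp [pow_succ]
  | succ j ih =>
      calc (y+e)^(j+2) = (y+e) * (y+e)^(j+1) := by ring
        _ ≤ (y+e) * (y^(j+1) + (j+1)*e*(y+e)^j) := by
              exact Nat.mul_le_mul_left _ ih
        _ = y*y^(j+1) + e*y^(j+1) + (j+1)*e*((y+e)*(y+e)^j) := by ring
        _ ≤ y^(j+2) + e*(y+e)^(j+1) + (j+1)*e*(y+e)^(j+1) := by
              have : y^(j+1) ≤ (y+e)^(j+1) := Nat.pow_le_pow_left (by omega) _
              have h2 : (y+e)*(y+e)^j = (y+e)^(j+1) := by ring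
              rw [h2]
              have h3 : e*y^(j+1) ≤ e*(y+e)^(j+1) := Nat.mul_le_mul_left _ this
              have h4 : y*y^(j+1) = y^(j+2) := by ring
              omega
        _ = y^(j+2) + (j+2)*e*(y+e)^(j+1) := by ring

-- lower: y^(j+1) + (j+1)*e*y^j ≤ (y+e)^(j+1)
lemma le_pow_add' (y e : ℕ) : ∀ j : ℕ, y^(j+1) + (j+1)*e*y^j ≤ (y+e)^(j+1) := by
  intro j
  induction j with
  | zero => simp [pow_succ]
  | succ j ih =>
      calc y^(j+2) + (j+2)*e*y^(j+1)
          = y*(y^(j+1) + (j+1)*e*y^j) + e*y^(j+1) := by ring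
        _ ≤ (y+e)*(y+e)^(j+1) := by
              have h1 : y*(y^(j+1) + (j+1)*e*y^j) ≤ y*(y+e)^(j+1) := Nat.mul_le_mul_left _ ih
              have h2 : e*y^(j+1) ≤ e*(y+e)^(j+1) := Nat.mul_le_mul_left _ (Nat.pow_le_pow_left (by omega) _)
              nlinarith
        _ = (y+e)^(j+2) := by ring

lemma sum_pow_lb (j : ℕ) : ∀ M : ℕ, M^(j+1) ≤ (j+1) * ∑ m ∈ range (M+1), m^j := by
  intro M
  induction M with
  | zero => simp
  | succ M ih =>
      rw [Finset.sum_range_succ, Nat.mul_add]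
      have := pow_add_le' M 1 j
      simp only [Nat.mul_one] at this
      calc (M+1)^(j+1) ≤ M^(j+1) + (j+1)*1*(M+1)^j := pow_add_le' M 1 j
        _ ≤ (j+1) * ∑ m ∈ range (M+1), m^j + (j+1)*(M+1)^j := by
            simp only [Nat.mul_one]; omega
        _ = _ := by ring_nf

lemma sum_pow_ub (j : ℕ) : ∀ T : ℕ, (j+1) * ∑ m ∈ range T, m^j ≤ T^(j+1) := by
  intro T
  induction T with
  | zero => simp
  | succ T ih =>
      rw [Finset.sum_range_succ, Nat.mul_add]
      have := le_pow_add' T 1 j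
      simp only [Nat.mul_one] at this
      omega

section Tcount

lemma finite_le_aux (j M : ℕ) : Finite {t : Fin j → ℕ // ∑ i, t i ≤ M} := by
  apply Finite.of_injective (fun t => (fun i => (⟨t.1 i, by
    have h1 : t.1 i ≤ ∑ i', t.1 i' := Finset.single_le_sum (fun i' _ => Nat.zero_le _) (Finset.mem_univ i)
    have := t.2
    omega⟩ : Fin (M+1))) : _ → (Fin j → Fin (M+1)))
  intro a b hab
  ext i
  have := congrFun hab i
  simpa using congrArg Fin.val this

noncomputable def Tc (j M : ℕ) : ℕ := Nat.card {t : Fin j → ℕ // ∑ i, t i ≤ M}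

lemma Tc_zero (M : ℕ) : Tc 0 M = 1 := by
  have : Unique {t : Fin 0 → ℕ // ∑ i, t i ≤ M} :=
    { default := ⟨finZeroElim, by simp⟩
      uniq := fun a => by ext i; exact i.elim0 }
  exact Nat.card_unique

lemma Tc_succ (j M : ℕ) : Tc (j+1) M = ∑ m ∈ Finset.range (M+1), Tc j (M - m) := by
  have e : {t : Fin (j+1) → ℕ // ∑ i, t i ≤ M} ≃
      (v : Fin (M+1)) × {t : Fin j → ℕ // ∑ i, t i ≤ M - (v : ℕ)} := by
    refine ⟨fun t => ⟨⟨t.1 (Fin.last j), ?_⟩, ⟨Fin.init t.1, ?_⟩⟩, fun p => ⟨Fin.snoc p.2.1 p.1, ?_⟩, ?_, ?_⟩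
    · have h1 : t.1 (Fin.last j) ≤ ∑ i, t.1 i := Finset.single_le_sum (fun i' _ => Nat.zero_le _) (Finset.mem_univ _)
      have := t.2; omega
    · show (∑ i : Fin j, Fin.init t.1 i) ≤ M - t.1 (Fin.last j)
      have hs : ∑ i, t.1 i = (∑ i : Fin j, Fin.init t.1 i) + t.1 (Fin.last j) := by
        rw [Fin.sum_univ_castSucc]; rfl
      have := t.2; omega
    · have hs : ∑ i, (Fin.snoc p.2.1 (p.1 : ℕ) : Fin (j+1) → ℕ) i
          = (∑ i : Fin j, p.2.1 i) + (p.1 : ℕ) := by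
        rw [Fin.sum_univ_castSucc]
        simp [Fin.snoc_castSucc, Fin.snoc_last]
      have h2 := p.2.2
      have h1 : (p.1 : ℕ) ≤ M := by omega
      omega
    · intro t
      ext i
      simp [Fin.snoc_init_self]
    · intro p
      obtain ⟨v, t, ht⟩ := p
      refine Sigma.ext ?_ ?_
      · ext
        simp [Fin.snoc_last]
      · rw [Subtype.heq_iff_coe_eq]
        · ext i; simp [Fin.init_snoc]
        · intro x
          simp [Fin.snoc_last]
  haveI : ∀ v : Fin (M+1), Finite {t : Fin j → ℕ // ∑ i, t i ≤ M - (v:ℕ)} := fun v => finite_le_aux _ _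
  haveI : ∀ v : Fin (M+1), Fintype {t : Fin j → ℕ // ∑ i, t i ≤ M - (v:ℕ)} := fun v => Fintype.ofFinite _
  rw [Tc, Nat.card_congr e, Nat.card_eq_fintype_card]
  trans ∑ v : Fin (M+1), Fintype.card {t : Fin j → ℕ // ∑ i, t i ≤ M - (v:ℕ)}
  · exact Fintype.card_sigma
  · rw [← Fin.sum_univ_eq_sum_range (fun m => Tc j (M - m)) (M+1)]
    exact Finset.sum_congr rfl fun v _ => (Nat.card_eq_fintype_card).symm

lemma Tc_lb (j : ℕ) : ∀ M : ℕ, M ^ j ≤ j.factorial * Tc j M := by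
  induction j with
  | zero => intro M; simp [Tc_zero]
  | succ j ih =>
      intro M
      rw [Tc_succ]
      calc M^(j+1) ≤ (j+1) * ∑ m ∈ Finset.range (M+1), m^j := sum_pow_lb j M
        _ = (j+1) * ∑ m ∈ Finset.range (M+1), (M - m)^j := by
            congr 1
            simpa using (Finset.sum_range_reflect (fun m => m^j) (M+1)).symm
        _ ≤ (j+1) * ∑ m ∈ Finset.range (M+1), j.factorial * Tc j (M - m) := by
            apply Nat.mul_le_mul_left
            exact Finset.sum_le_sum fun m _ => ih (M - m)
        _ = (j+1) * (j.factorial * ∑ m ∈ Finset.range (M+1), Tc j (M - m)) := by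
            simp [Finset.mul_sum, mul_assoc]
        _ = (j+1).factorial * ∑ m ∈ Finset.range (M+1), Tc j (M - m) := by
            rw [Nat.factorial_succ, mul_assoc]

lemma Tc_ub (j : ℕ) : ∀ M : ℕ, j.factorial * Tc j M ≤ (M + j) ^ j := by
  induction j with
  | zero => intro M; simp [Tc_zero]
  | succ j ih =>
      intro M
      rw [Tc_succ]
      calc (j+1).factorial * ∑ m ∈ Finset.range (M+1), Tc j (M - m)
          = (j+1) * ∑ m ∈ Finset.range (M+1), j.factorial * Tc j (M - m) := by
            rw [Nat.factorial_succ, mul_assoc]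
            simp [Finset.mul_sum, mul_assoc]
        _ ≤ (j+1) * ∑ m ∈ Finset.range (M+1), (M - m + j)^j := by
            apply Nat.mul_le_mul_left
            exact Finset.sum_le_sum fun m _ => ih (M - m)
        _ = (j+1) * ∑ m ∈ Finset.range (M+1), (m + j)^j := by
            congr 1
            simpa using Finset.sum_range_reflect (fun m => (m + j)^j) (M+1)
        _ ≤ (j+1) * ∑ m ∈ Finset.range (M+j+1), m^j := by
            apply Nat.mul_le_mul_left
            have : ∑ m ∈ Finset.range (M+1), (m+j)^j = ∑ m ∈ Finset.Ico j (M+j+1), m^j := by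
              rw [Finset.sum_Ico_eq_sum_range]
              refine Finset.sum_congr (by congr 1; omega) fun m _ => by ring_nf
            rw [this, Finset.range_eq_Ico]
            exact Finset.sum_le_sum_of_subset (Finset.Ico_subset_Ico (Nat.zero_le _) le_rfl)
        _ ≤ (M+j+1)^(j+1) := sum_pow_ub j (M+j+1)
        _ = (M + (j+1))^(j+1) := by ring_nf

end Tcount

section Main

variable {n : ℕ}

noncomputable def cnt (d : Fin (n+1) → ℕ) (m : ℕ) : ℕ :=
  Nat.card {a : Fin (n+1) → ℕ // ∑ i, a i * d i = m}

noncomputable def cum (d : Fin (n+1) → ℕ) (N : ℕ) : ℕ :=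
  Nat.card {a : Fin (n+1) → ℕ // ∑ i, a i * d i ≤ N}

lemma term_le_sum (d : Fin (n+1) → ℕ) (hd : ∀ i, 0 < d i) (a : Fin (n+1) → ℕ) (i : Fin (n+1)) :
    a i ≤ ∑ i', a i' * d i' := by
  calc a i ≤ a i * d i := Nat.le_mul_of_pos_right _ (hd i)
    _ ≤ ∑ i', a i' * d i' :=
      Finset.single_le_sum (f := fun i' => a i' * d i') (fun i' _ => Nat.zero_le _)
        (Finset.mem_univ i)

lemma finite_cum (d : Fin (n+1) → ℕ) (hd : ∀ i, 0 < d i) (N : ℕ) :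
    Finite {a : Fin (n+1) → ℕ // ∑ i, a i * d i ≤ N} := by
  apply Finite.of_injective (fun a => (fun i => (⟨a.1 i, by
    have := term_le_sum d hd a.1 i
    have := a.2
    omega⟩ : Fin (N+1))) : _ → (Fin (n+1) → Fin (N+1)))
  intro a b hab
  ext i
  simpa using congrArg Fin.val (congrFun hab i)

lemma finite_cnt (d : Fin (n+1) → ℕ) (hd : ∀ i, 0 < d i) (m : ℕ) :
    Finite {a : Fin (n+1) → ℕ // ∑ i, a i * d i = m} := by
  haveI := finite_cum d hd m
  exact Finite.of_injective
    (fun a => (⟨a.1, a.2.le⟩ : {a : Fin (n+1) → ℕ // ∑ i, a i * d i ≤ m}))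
    (fun a b hab => Subtype.ext (by simpa using congrArg Subtype.val hab))

lemma cum_eq_sum (d : Fin (n+1) → ℕ) (hd : ∀ i, 0 < d i) (N : ℕ) :
    cum d N = ∑ m ∈ Finset.range (N+1), cnt d m := by
  have e : {a : Fin (n+1) → ℕ // ∑ i, a i * d i ≤ N} ≃
      (m : Fin (N+1)) × {a : Fin (n+1) → ℕ // ∑ i, a i * d i = (m : ℕ)} := by
    refine ⟨fun a => ⟨⟨∑ i, a.1 i * d i, by omega⟩, ⟨a.1, rfl⟩⟩,
      fun p => ⟨p.2.1, by rw [p.2.2]; omega⟩, fun a => rfl, ?_⟩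
    intro p
    obtain ⟨m, a, ha⟩ := p
    refine Sigma.ext ?_ ?_
    · ext; simpa using ha
    · rw [Subtype.heq_iff_coe_eq]
      intro x
      simp [ha]
  haveI : ∀ m : Fin (N+1), Finite {a : Fin (n+1) → ℕ // ∑ i, a i * d i = (m:ℕ)} :=
    fun m => finite_cnt d hd _
  haveI : ∀ m : Fin (N+1), Fintype {a : Fin (n+1) → ℕ // ∑ i, a i * d i = (m:ℕ)} :=
    fun m => Fintype.ofFinite _
  rw [cum, Nat.card_congr e, Nat.card_eq_fintype_card]
  trans ∑ m : Fin (N+1), Fintype.card {a : Fin (n+1) → ℕ // ∑ i, a i * d i = (m:ℕ)}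
  · exact Fintype.card_sigma
  · rw [← Fin.sum_univ_eq_sum_range (fun m => cnt d m) (N+1)]
    exact Finset.sum_congr rfl fun m _ => (Nat.card_eq_fintype_card).symm

lemma div_mod_unique' {dd a b r s : ℕ} (hr : r < dd) (hs : s < dd)
    (h : a * dd + r = b * dd + s) : a = b ∧ r = s := by
  have h1 : a = (a * dd + r) / dd := by
    rw [Nat.mul_comm a dd, Nat.mul_add_div (by omega)]
    simp [Nat.div_eq_of_lt hr]
  have h2 : b = (b * dd + s) / dd := by
    rw [Nat.mul_comm b dd, Nat.mul_add_div (by omega)]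
    simp [Nat.div_eq_of_lt hs]
  have : a = b := by rw [h1, h, ← h2]
  constructor
  · exact this
  · subst this; omega

def pack (d : Fin (n+1) → ℕ) (hd : ∀ i, 0 < d i) (N : ℕ) :
    {t : Fin (n+1) → ℕ // ∑ i, t i ≤ N} →
      ({a : Fin (n+1) → ℕ // ∑ i, a i * d i ≤ N} × (∀ i, Fin (d i))) := fun t =>
  ⟨⟨fun i => t.1 i / d i,
      le_trans (Finset.sum_le_sum fun i _ => Nat.div_mul_le_self (t.1 i) (d i)) t.2⟩,
    fun i => ⟨t.1 i % d i, Nat.mod_lt _ (hd i)⟩⟩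

def unpack (d : Fin (n+1) → ℕ) (N : ℕ) :
    ({a : Fin (n+1) → ℕ // ∑ i, a i * d i ≤ N} × (∀ i, Fin (d i))) →
      {t : Fin (n+1) → ℕ // ∑ i, t i ≤ N + ∑ i, (d i - 1)} := fun p =>
  ⟨fun i => p.1.1 i * d i + (p.2 i : ℕ), by
    rw [Finset.sum_add_distrib]
    exact Nat.add_le_add p.1.2
      (Finset.sum_le_sum fun i _ => Nat.le_pred_of_lt (p.2 i).2)⟩

lemma T_le_P_cum (d : Fin (n+1) → ℕ) (hd : ∀ i, 0 < d i) (N : ℕ) :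
    Tc (n+1) N ≤ (∏ i, d i) * cum d N := by
  haveI := finite_cum d hd N
  have hcard : Nat.card ({a : Fin (n+1) → ℕ // ∑ i, a i * d i ≤ N} × (∀ i, Fin (d i)))
      = cum d N * ∏ i, d i := by
    rw [Nat.card_prod, Nat.card_pi]
    simp [cum, Nat.card_eq_fintype_card]
  rw [mul_comm, ← hcard]
  unfold Tc
  apply Nat.card_le_card_of_injective (pack d hd N)
  intro t u htu
  have h1 : ∀ i, t.1 i / d i = u.1 i / d i := fun i => by
    have := congrFun (congrArg (fun p => Subtype.val p.1) htu) i
    simpa [pack] using this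
  have h2 : ∀ i, t.1 i % d i = u.1 i % d i := fun i => by
    have := congrArg Fin.val (congrFun (congrArg Prod.snd htu) i)
    simpa [pack] using this
  ext i
  have ht := (Nat.div_add_mod (t.1 i) (d i)).symm
  rw [ht, h1 i, h2 i, Nat.div_add_mod]

lemma P_cum_le_T (d : Fin (n+1) → ℕ) (hd : ∀ i, 0 < d i) (N : ℕ) :
    (∏ i, d i) * cum d N ≤ Tc (n+1) (N + ∑ i, (d i - 1)) := by
  haveI := finite_cum d hd N
  haveI := finite_le_aux (n+1) (N + ∑ i, (d i - 1))
  have hcard : Nat.card ({a : Fin (n+1) → ℕ // ∑ i, a i * d i ≤ N} × (∀ i, Fin (d i)))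
      = cum d N * ∏ i, d i := by
    rw [Nat.card_prod, Nat.card_pi]
    simp [cum, Nat.card_eq_fintype_card]
  rw [mul_comm, ← hcard]
  unfold Tc
  apply Nat.card_le_card_of_injective (unpack d N)
  intro p q hpq
  have h : ∀ i, p.1.1 i * d i + (p.2 i : ℕ) = q.1.1 i * d i + (q.2 i : ℕ) := fun i => by
    have := congrFun (congrArg Subtype.val hpq) i
    simpa [unpack] using this
  have key : ∀ i, p.1.1 i = q.1.1 i ∧ (p.2 i : ℕ) = (q.2 i : ℕ) := fun i =>
    div_mod_unique' (p.2 i).2 (q.2 i).2 (h i)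
  exact Prod.ext (Subtype.ext (funext fun i => (key i).1)) (funext fun i => Fin.ext (key i).2)

end Main

section NRep

variable {n : ℕ}

def NRep (d : Fin (n+1) → ℕ) (t : ℕ) : Prop := ∃ c : Fin (n+1) → ℕ, ∑ i, c i * d i = t

lemma NRep.add {d : Fin (n+1) → ℕ} {s t : ℕ} (hs : NRep d s) (ht : NRep d t) : NRep d (s + t) := by
  obtain ⟨c, hc⟩ := hs
  obtain ⟨c', hc'⟩ := ht
  exact ⟨fun i => c i + c' i, by simp [add_mul, Finset.sum_add_distrib, hc, hc']⟩

lemma NRep.smul {d : Fin (n+1) → ℕ} {t : ℕ} (m : ℕ) (ht : NRep d t) : NRep d (m * t) := by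
  obtain ⟨c, hc⟩ := ht
  exact ⟨fun i => m * c i, by
    rw [← hc, Finset.mul_sum]
    exact Finset.sum_congr rfl fun i _ => by ring⟩

lemma cnt_mono (d : Fin (n+1) → ℕ) (hd : ∀ i, 0 < d i) {m t : ℕ} (h : NRep d t) :
    cnt d m ≤ cnt d (m + t) := by
  obtain ⟨c, hc⟩ := h
  haveI := finite_cnt d hd (m + t)
  apply Nat.card_le_card_of_injective
    (fun a => (⟨fun i => a.1 i + c i, by
      simp only [add_mul, Finset.sum_add_distrib]
      rw [a.2, hc]⟩ : {a : Fin (n+1) → ℕ // ∑ i, a i * d i = m + t}))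
  intro a b hab
  have h := congrArg Subtype.val hab
  simp only at h
  ext i
  have := congrFun h i
  simpa using this

lemma bezout (d : Fin (n+1) → ℕ) (hgcd : Finset.univ.gcd d = 1) :
    ∃ z : Fin (n+1) → ℤ, ∑ i, z i * d i = 1 := by
  suffices H : ∀ s : Finset (Fin (n+1)), ∃ z : Fin (n+1) → ℤ,
      ∑ i ∈ s, z i * d i = (s.gcd d : ℕ) by
    obtain ⟨z, hz⟩ := H Finset.univ
    exact ⟨z, by rw [hz, hgcd]; norm_num⟩
  intro s
  induction s using Finset.induction_on with
  | empty => exact ⟨fun _ => 0, by simp⟩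
  | @insert a s ha ih =>
      obtain ⟨z, hz⟩ := ih
      set g : ℕ := s.gcd d with hg
      refine ⟨fun i => if i = a then Nat.gcdA (d a) g else Nat.gcdB (d a) g * z i, ?_⟩
      rw [Finset.sum_insert ha]
      have h1 : ∀ i ∈ s, (if i = a then Nat.gcdA (d a) g else Nat.gcdB (d a) g * z i) * (d i : ℤ)
          = Nat.gcdB (d a) g * (z i * d i) := by
        intro i hi
        have : i ≠ a := fun h => ha (h ▸ hi)
        rw [if_neg this]; ring
      rw [Finset.sum_congr rfl h1, ← Finset.mul_sum, hz]
      rw [Finset.gcd_insert]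
      have : (GCDMonoid.gcd (d a) g : ℕ) = Nat.gcd (d a) g := rfl
      rw [this, Nat.gcd_eq_gcd_ab]
      simp only [eq_self_iff_true, if_true]
      ring

end NRep

lemma exists_frobenius {n : ℕ} (d : Fin (n+1) → ℕ) (hgcd : Finset.univ.gcd d = 1) :
    ∃ F : ℕ, ∀ t : ℕ, F ≤ t → NRep d t := by
  obtain ⟨z, hz⟩ := bezout d hgcd
  set v : ℕ := ∑ i, (-(z i)).toNat * d i with hv
  set u : ℕ := ∑ i, (z i).toNat * d i with hu
  have hrepu : NRep d u := ⟨fun i => (z i).toNat, rfl⟩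
  have hrepv : NRep d v := ⟨fun i => (-(z i)).toNat, rfl⟩
  have huv : (u : ℤ) - v = 1 := by
    rw [hu, hv]
    push_cast
    rw [← Finset.sum_sub_distrib, ← hz]
    refine Finset.sum_congr rfl fun i _ => ?_
    have : ((z i).toNat : ℤ) - ((-(z i)).toNat : ℤ) = z i := by omega
    rw [← sub_mul, this]
  have huv' : u = v + 1 := by omega
  clear_value v u
  refine ⟨v * v, fun t ht => ?_⟩
  rcases Nat.eq_zero_or_pos v with hv0 | hv0
  · have h1 : NRep d 1 := by rw [hv0] at huv'; rwa [huv'] at hrepu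
    have := h1.smul t
    simpa using this
  · have hrv : t % v < v := Nat.mod_lt _ hv0
    have hqr : t % v ≤ t / v := by
      have h2 : v ≤ t / v := (Nat.le_div_iff_mul_le hv0).mpr ht
      omega
    have h2 : (t / v - t % v) * v + (t % v) * v = (t / v) * v := by
      rw [← Nat.add_mul, Nat.sub_add_cancel hqr]
    have hdm := Nat.div_add_mod t v
    have key : t = (t / v - t % v) * v + (t % v) * u := by
      rw [huv']
      calc t = v * (t / v) + t % v := hdm.symm
        _ = (t / v) * v + t % v := by rw [mul_comm]
        _ = ((t / v - t % v) * v + (t % v) * v) + t % v := by rw [h2]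
        _ = (t / v - t % v) * v + (t % v) * (v + 1) := by ring
    rw [key]
    exact ((hrepv.smul (t / v - t % v)).add (hrepu.smul (t % v)))

section Squeeze

variable {n : ℕ}

lemma upper_step (d : Fin (n+1) → ℕ) (hd : ∀ i, 0 < d i) {F : ℕ}
    (hF : ∀ t, F ≤ t → NRep d t) (h N : ℕ) :
    (h+1) * cnt d N + (∑ m ∈ Finset.range (N+F), cnt d m) ≤ cum d (N+F+h) := by
  rw [cum_eq_sum d hd]
  have hsplit : ∑ m ∈ Finset.range (N+F+h+1), cnt d m
      = (∑ m ∈ Finset.range (N+F), cnt d m) + ∑ m ∈ Finset.Ico (N+F) (N+F+h+1), cnt d m := by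
    rw [Finset.range_eq_Ico, Finset.range_eq_Ico]
    exact (Finset.sum_Ico_consecutive (cnt d) (Nat.zero_le (N+F)) (by omega : N+F ≤ N+F+h+1)).symm
  rw [hsplit]
  have hb : ∀ m ∈ Finset.Ico (N+F) (N+F+h+1), cnt d N ≤ cnt d m := by
    intro m hm
    simp only [Finset.mem_Ico] at hm
    have h1 : m = N + (m - N) := by omega
    rw [h1]
    exact cnt_mono d hd (hF _ (by omega))
  have : (h+1) * cnt d N = ∑ _m ∈ Finset.Ico (N+F) (N+F+h+1), cnt d N := by
    rw [Finset.sum_const, Nat.card_Ico, smul_eq_mul]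
    congr 1
    omega
  rw [this]
  have := Finset.sum_le_sum hb
  omega

lemma lower_step (d : Fin (n+1) → ℕ) (hd : ∀ i, 0 < d i) {F : ℕ}
    (hF : ∀ t, F ≤ t → NRep d t) (h N : ℕ) (hN : F + h + 1 ≤ N) :
    cum d (N-F) ≤ (h+1) * cnt d N + (∑ m ∈ Finset.range (N-F-h), cnt d m) := by
  rw [cum_eq_sum d hd]
  have he : N - F + 1 = (N - F - h) + (h+1) := by omega
  have hsplit : ∑ m ∈ Finset.range (N-F+1), cnt d m
      = (∑ m ∈ Finset.range (N-F-h), cnt d m) + ∑ m ∈ Finset.Ico (N-F-h) (N-F+1), cnt d m := by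
    rw [Finset.range_eq_Ico, Finset.range_eq_Ico]
    exact (Finset.sum_Ico_consecutive (cnt d) (Nat.zero_le (N-F-h)) (by omega : N-F-h ≤ N-F+1)).symm
  rw [hsplit]
  have hb : ∀ m ∈ Finset.Ico (N-F-h) (N-F+1), cnt d m ≤ cnt d N := by
    intro m hm
    simp only [Finset.mem_Ico] at hm
    have h1 : N = m + (N - m) := by omega
    rw [h1]
    exact cnt_mono d hd (hF _ (by omega))
  have hcard : ∑ m ∈ Finset.Ico (N-F-h) (N-F+1), cnt d m ≤ (h+1) * cnt d N := by
    calc ∑ m ∈ Finset.Ico (N-F-h) (N-F+1), cnt d m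
        ≤ ∑ _m ∈ Finset.Ico (N-F-h) (N-F+1), cnt d N := Finset.sum_le_sum hb
      _ = (h+1) * cnt d N := by
          rw [Finset.sum_const, Nat.card_Ico, smul_eq_mul]
          congr 1
          omega
  omega

lemma sq_upper (d : Fin (n+1) → ℕ) (hd : ∀ i, 0 < d i) {F : ℕ}
    (hF : ∀ t, F ≤ t → NRep d t) (hF1 : 1 ≤ F) (h N : ℕ) :
    (n+1).factorial * (∏ i, d i) * ((h+1) * cnt d N)
      ≤ (n+1) * (h + (∑ i, (d i - 1)) + (n+1) + 1)
          * (N + F + h + (∑ i, (d i - 1)) + (n+1))^n := by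
  set s := ∑ i, (d i - 1) with hs
  set P := ∏ i, d i with hP
  have step := upper_step d hd hF h N
  have hsum : ∑ m ∈ Finset.range (N+F), cnt d m = cum d (N+F-1) := by
    rw [cum_eq_sum d hd]
    have he : N+F-1+1 = N+F := by omega
    rw [he]
  rw [hsum] at step
  have step2 : (n+1).factorial * (P * ((h+1) * cnt d N)) + (n+1).factorial * (P * cum d (N+F-1))
      ≤ (n+1).factorial * (P * cum d (N+F+h)) := by
    rw [← Nat.mul_add, ← Nat.mul_add]
    exact Nat.mul_le_mul_left _ (Nat.mul_le_mul_left _ step)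
  have hup : (n+1).factorial * (P * cum d (N+F+h)) ≤ (N+F+h+s+(n+1))^(n+1) :=
    le_trans (Nat.mul_le_mul_left _ (P_cum_le_T d hd _)) (Tc_ub (n+1) (N+F+h+s))
  have hlo : (N+F-1)^(n+1) ≤ (n+1).factorial * (P * cum d (N+F-1)) :=
    le_trans (Tc_lb (n+1) (N+F-1)) (Nat.mul_le_mul_left _ (T_le_P_cum d hd _))
  have hpow := pow_add_le' (N+F-1) (h+s+(n+1)+1) n
  have hye : N+F-1 + (h+s+(n+1)+1) = N+F+h+s+(n+1) := by omega
  rw [hye] at hpow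
  calc (n+1).factorial * P * ((h+1) * cnt d N)
      = (n+1).factorial * (P * ((h+1) * cnt d N)) := by ring
    _ ≤ (n+1) * (h+s+(n+1)+1) * (N+F+h+s+(n+1))^n := by linarith [step2, hup, hlo, hpow]

lemma sq_lower (d : Fin (n+1) → ℕ) (hd : ∀ i, 0 < d i) {F : ℕ}
    (hF : ∀ t, F ≤ t → NRep d t) (hF1 : 1 ≤ F) (h N : ℕ)
    (hN : F + h + 1 ≤ N) (hh : (∑ i, (d i - 1)) + (n+1) ≤ h + 1) :
    (n+1) * (h + 1 - ((∑ i, (d i - 1)) + (n+1))) * (N - F - h - 1 + (∑ i, (d i - 1)) + (n+1))^n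
      ≤ (n+1).factorial * (∏ i, d i) * ((h+1) * cnt d N) := by
  set s := ∑ i, (d i - 1) with hs
  set P := ∏ i, d i with hP
  have step := lower_step d hd hF h N hN
  have hsum : ∑ m ∈ Finset.range (N-F-h), cnt d m = cum d (N-F-h-1) := by
    rw [cum_eq_sum d hd]
    have he : N-F-h-1+1 = N-F-h := by omega
    rw [he]
  rw [hsum] at step
  have step2 : (n+1).factorial * (P * cum d (N-F))
      ≤ (n+1).factorial * (P * ((h+1) * cnt d N)) + (n+1).factorial * (P * cum d (N-F-h-1)) := by
    rw [← Nat.mul_add, ← Nat.mul_add]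
    exact Nat.mul_le_mul_left _ (Nat.mul_le_mul_left _ step)
  have hlo : (N-F)^(n+1) ≤ (n+1).factorial * (P * cum d (N-F)) :=
    le_trans (Tc_lb (n+1) (N-F)) (Nat.mul_le_mul_left _ (T_le_P_cum d hd _))
  have hup : (n+1).factorial * (P * cum d (N-F-h-1)) ≤ (N-F-h-1+s+(n+1))^(n+1) :=
    le_trans (Nat.mul_le_mul_left _ (P_cum_le_T d hd _)) (Tc_ub (n+1) (N-F-h-1+s))
  have hpow := le_pow_add' (N-F-h-1+s+(n+1)) (h+1-s-(n+1)) n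
  have hye : N-F-h-1+s+(n+1) + (h+1-s-(n+1)) = N-F := by omega
  rw [hye] at hpow
  calc (n+1) * (h + 1 - (s + (n+1))) * (N - F - h - 1 + s + (n+1))^n
      = (n+1) * (h+1-s-(n+1)) * (N-F-h-1+s+(n+1))^n := by congr 2; omega
    _ ≤ (n+1).factorial * (P * ((h+1) * cnt d N)) := by linarith [step2, hup, hlo, hpow]
    _ = (n+1).factorial * P * ((h+1) * cnt d N) := by ring

end Squeeze

section Limits

open Filter Topology

lemma aux_ratio (a : ℝ) : Tendsto (fun x : ℝ => (x + a)/(x + 1)) atTop (nhds 1) := by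
  have h0 : Tendsto (fun x : ℝ => (a-1)/(x+1)) atTop (nhds 0) :=
    Tendsto.div_atTop tendsto_const_nhds (tendsto_atTop_add_const_right _ 1 tendsto_id)
  have h1 : Tendsto (fun x : ℝ => 1 + (a-1)/(x+1)) atTop (nhds 1) := by
    simpa using Tendsto.const_add 1 h0
  apply Tendsto.congr' _ h1
  filter_upwards [eventually_gt_atTop (0:ℝ)] with x hx
  have hx1 : x + 1 ≠ 0 := by positivity
  field_simp
  ring

lemma sqrt_tendsto : Tendsto (fun N : ℕ => Nat.sqrt N) atTop atTop := by
  apply Filter.tendsto_atTop_atTop.mpr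
  intro b
  exact ⟨b*b, fun a ha => Nat.le_sqrt.mpr ha⟩

lemma sqrtR_tendsto : Tendsto (fun N : ℕ => ((Nat.sqrt N : ℕ) : ℝ)) atTop atTop :=
  tendsto_natCast_atTop_atTop.comp sqrt_tendsto

lemma sqrt_ratio (a : ℝ) :
    Tendsto (fun N : ℕ => ((Nat.sqrt N : ℝ) + a)/((Nat.sqrt N : ℝ) + 1)) atTop (nhds 1) :=
  (aux_ratio a).comp sqrtR_tendsto

lemma sqrt_over_self : Tendsto (fun N : ℕ => (Nat.sqrt N : ℝ)/(N : ℝ)) atTop (nhds 0) := by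
  have h1 : Tendsto (fun N : ℕ => 1/((Nat.sqrt N : ℝ))) atTop (nhds 0) := by
    simpa [one_div, Function.comp_def] using tendsto_inv_atTop_zero.comp sqrtR_tendsto
  apply tendsto_of_tendsto_of_tendsto_of_le_of_le' tendsto_const_nhds h1
  · filter_upwards [eventually_ge_atTop 1] with N hN
    positivity
  · filter_upwards [eventually_ge_atTop 1] with N hN
    have hs1 : 1 ≤ Nat.sqrt N := Nat.le_sqrt.mpr (by omega)
    have h0 : (0:ℝ) < (Nat.sqrt N : ℝ) := by exact_mod_cast hs1
    have hN0 : (0:ℝ) < (N:ℝ) := by exact_mod_cast hN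
    rw [div_le_div_iff₀ hN0 h0, one_mul]
    exact_mod_cast Nat.sqrt_le N

lemma lin_sqrt_ratio (b : ℝ) (e : ℝ) :
    Tendsto (fun N : ℕ => ((N : ℝ) + b + e * (Nat.sqrt N : ℝ))/(N : ℝ)) atTop (nhds 1) := by
  have h1 : Tendsto (fun N : ℕ => 1 + b * (1/(N:ℝ)) + e * ((Nat.sqrt N : ℝ)/(N:ℝ)))
      atTop (nhds 1) := by
    have := ((tendsto_const_nhds (x := (1:ℝ))).add
      ((tendsto_one_div_atTop_nhds_zero_nat).const_mul b)).add (sqrt_over_self.const_mul e)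
    simpa using this
  apply Tendsto.congr' _ h1
  filter_upwards [eventually_ge_atTop 1] with N hN
  have hN0 : (N:ℝ) ≠ 0 := by
    have : (0:ℝ) < (N:ℝ) := by exact_mod_cast hN
    exact ne_of_gt this
  field_simp

end Limits

open Filter Topology

/-- The number of `(n+1)`-tuples of naturals `a` with `∑ i, a i * d i = N`,
divided by `N ^ n`, tends to `1 / (n! * d₀ ⋯ dₙ)` as `N → ∞`, provided the
`d i` are positive with gcd `1`. -/
theorem stmt0 (n : ℕ) (d : Fin (n + 1) → ℕ) (hd : ∀ i, 0 < d i)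
    (hgcd : Finset.univ.gcd d = 1) :
    Filter.Tendsto
      (fun N : ℕ =>
        (Nat.card {a : Fin (n + 1) → ℕ // ∑ i, a i * d i = N} : ℝ) / (N : ℝ) ^ n)
      Filter.atTop
      (nhds (1 / ((n.factorial : ℝ) * ∏ i, (d i : ℝ)))) := by
  obtain ⟨F₀, hF₀⟩ := exists_frobenius d hgcd
  set F : ℕ := F₀ + 1 with hFdef
  have hF : ∀ t, F ≤ t → NRep d t := fun t ht => hF₀ t (by omega)
  have hF1 : 1 ≤ F := by omega
  obtain ⟨S, hS⟩ : ∃ S, ∑ i, (d i - 1) = S := ⟨_, rfl⟩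
  obtain ⟨P, hP⟩ : ∃ P, ∏ i, d i = P := ⟨_, rfl⟩
  have hPpos : 0 < P := by
    rw [← hP]; exact Finset.prod_pos fun i _ => hd i
  have hPR : ((P : ℝ)) = ∏ i, (d i : ℝ) := by rw [← hP]; push_cast; rfl
  have hPRpos : (0:ℝ) < (P:ℝ) := by exact_mod_cast hPpos
  have hfacpos : (0:ℝ) < (n.factorial : ℝ) := by exact_mod_cast n.factorial_pos
  have hfacsucc : (((n+1).factorial : ℕ) : ℝ) = ((n:ℝ)+1) * (n.factorial : ℝ) := by
    push_cast [Nat.factorial_succ]; ring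
  set c : ℝ := 1 / ((n.factorial : ℝ) * (P:ℝ)) with hc
  have hctarget : c = 1 / ((n.factorial : ℝ) * ∏ i, (d i : ℝ)) := by rw [hc, hPR]
  rw [← hctarget]
  have key : ∀ N : ℕ, cnt d N = Nat.card {a : Fin (n + 1) → ℕ // ∑ i, a i * d i = N} :=
    fun _ => rfl
  have tendU : Tendsto (fun N : ℕ =>
      c * (((Nat.sqrt N : ℝ) + ((S:ℝ) + n + 2))/((Nat.sqrt N : ℝ) + 1))
        * (((N:ℝ) + ((F:ℝ) + S + n + 1) + 1 * (Nat.sqrt N : ℝ))/(N:ℝ))^n)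
      atTop (nhds c) := by
    have h := ((tendsto_const_nhds (x := c)).mul (sqrt_ratio ((S:ℝ) + n + 2))).mul
      ((lin_sqrt_ratio ((F:ℝ) + S + n + 1) 1).pow n)
    simp only [mul_one, one_pow] at h
    exact h
  have tendL : Tendsto (fun N : ℕ =>
      c * (((Nat.sqrt N : ℝ) + (1 - ((S:ℝ) + n + 1)))/((Nat.sqrt N : ℝ) + 1))
        * (((N:ℝ) + ((S:ℝ) + n - F) + (-1) * (Nat.sqrt N : ℝ))/(N:ℝ))^n)
      atTop (nhds c) := by
    have h := ((tendsto_const_nhds (x := c)).mul (sqrt_ratio (1 - ((S:ℝ) + n + 1)))).mul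
      ((lin_sqrt_ratio ((S:ℝ) + n - F) (-1)).pow n)
    simp only [mul_one, one_pow] at h
    exact h
  apply tendsto_of_tendsto_of_tendsto_of_le_of_le' tendL tendU
  · -- lower bound eventually
    filter_upwards [eventually_ge_atTop ((S + n + 2)*(S + n + 2)),
      eventually_ge_atTop (2*F + 2*Nat.sqrt 0 + 8)] with N h1 h2
    have hx1 : S + (n+1) ≤ Nat.sqrt N + 1 := by
      have : S + n + 2 ≤ Nat.sqrt N := Nat.le_sqrt.mpr h1
      omega
    have hx2 : F + Nat.sqrt N + 1 ≤ N := by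
      have hs2 : Nat.sqrt N ≤ N / 2 := by
        have hq1 : N ≤ 2*(N/2) + 1 := by omega
        have hq2 : 2 ≤ N / 2 := by omega
        have : N < (N/2 + 1) * (N/2 + 1) := by nlinarith
        exact Nat.le_of_lt_succ (Nat.sqrt_lt.mpr this)
      omega
    have H := sq_lower d hd hF hF1 (Nat.sqrt N) N (by omega) (by rw [hS]; omega)
    rw [hS, hP] at H
    have hN1 : 1 ≤ N := by omega
    have hNR : (0:ℝ) < (N:ℝ) := by exact_mod_cast hN1
    have hxR : (0:ℝ) < (Nat.sqrt N : ℝ) + 1 := by positivity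
    have Hr : ((n:ℝ)+1) * (((Nat.sqrt N : ℝ) + 1) - ((S:ℝ) + n + 1))
          * (((N:ℝ) - ((F:ℝ) + (Nat.sqrt N : ℝ) + 1)) + (S:ℝ) + ((n:ℝ) + 1))^n
        ≤ (((n+1).factorial : ℕ) : ℝ) * (P:ℝ) * (((Nat.sqrt N : ℝ) + 1) * (cnt d N : ℝ)) := by
      have hcast1 : ((Nat.sqrt N + 1 - (S + (n+1)) : ℕ) : ℝ)
          = ((Nat.sqrt N : ℝ) + 1) - ((S:ℝ) + n + 1) := by
        rw [Nat.cast_sub hx1]; push_cast; ring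
      have hrw : N - F - Nat.sqrt N - 1 + S + (n+1) = N - (F + Nat.sqrt N + 1) + S + (n+1) := by
        omega
      have hcast2 : ((N - F - Nat.sqrt N - 1 + S + (n+1) : ℕ) : ℝ)
          = ((N:ℝ) - ((F:ℝ) + (Nat.sqrt N : ℝ) + 1)) + (S:ℝ) + ((n:ℝ) + 1) := by
        rw [hrw]
        push_cast [Nat.cast_sub hx2]
        ring
      calc ((n:ℝ)+1) * (((Nat.sqrt N : ℝ) + 1) - ((S:ℝ) + n + 1))
              * (((N:ℝ) - ((F:ℝ) + (Nat.sqrt N : ℝ) + 1)) + (S:ℝ) + ((n:ℝ) + 1))^n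
          = (((n+1) * (Nat.sqrt N + 1 - (S + (n+1)))
              * (N - F - Nat.sqrt N - 1 + S + (n+1))^n : ℕ) : ℝ) := by
            rw [Nat.cast_mul, Nat.cast_mul, Nat.cast_pow, hcast1, hcast2]
            push_cast
            ring
        _ ≤ (((n+1).factorial * P * ((Nat.sqrt N + 1) * cnt d N) : ℕ) : ℝ) := by
            exact_mod_cast H
        _ = (((n+1).factorial : ℕ) : ℝ) * (P:ℝ) * (((Nat.sqrt N : ℝ) + 1) * (cnt d N : ℝ)) := by
            push_cast
            ring
    rw [← key N]
    rw [le_div_iff₀ (by positivity : (0:ℝ) < (N:ℝ)^n)]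
    have heq : c * (((Nat.sqrt N : ℝ) + (1 - ((S:ℝ) + n + 1)))/((Nat.sqrt N : ℝ) + 1))
          * (((N:ℝ) + ((S:ℝ) + n - F) + (-1) * (Nat.sqrt N : ℝ))/(N:ℝ))^n * (N:ℝ)^n
        = (((n:ℝ)+1) * (((Nat.sqrt N : ℝ) + 1) - ((S:ℝ) + n + 1))
            * (((N:ℝ) - ((F:ℝ) + (Nat.sqrt N : ℝ) + 1)) + (S:ℝ) + ((n:ℝ) + 1))^n)
          / ((((n+1).factorial : ℕ) : ℝ) * (P:ℝ) * ((Nat.sqrt N : ℝ) + 1)) := by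
      rw [hc, hfacsucc]
      rw [div_pow]
      field_simp
      ring
    rw [heq, div_le_iff₀ (by rw [hfacsucc]; positivity)]
    calc ((n:ℝ)+1) * (((Nat.sqrt N : ℝ) + 1) - ((S:ℝ) + n + 1))
            * (((N:ℝ) - ((F:ℝ) + (Nat.sqrt N : ℝ) + 1)) + (S:ℝ) + ((n:ℝ) + 1))^n
        ≤ (((n+1).factorial : ℕ) : ℝ) * (P:ℝ) * (((Nat.sqrt N : ℝ) + 1) * (cnt d N : ℝ)) := Hr
      _ = (cnt d N : ℝ) * ((((n+1).factorial : ℕ) : ℝ) * (P:ℝ) * ((Nat.sqrt N : ℝ) + 1)) := by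
          ring
  · -- upper bound eventually
    filter_upwards [eventually_ge_atTop 1] with N hN1
    have H := sq_upper d hd hF hF1 (Nat.sqrt N) N
    rw [hS, hP] at H
    have hNR : (0:ℝ) < (N:ℝ) := by exact_mod_cast hN1
    have hxR : (0:ℝ) < (Nat.sqrt N : ℝ) + 1 := by positivity
    have Hr : (((n+1).factorial : ℕ) : ℝ) * (P:ℝ) * (((Nat.sqrt N : ℝ) + 1) * (cnt d N : ℝ))
        ≤ ((n:ℝ)+1) * ((Nat.sqrt N : ℝ) + (S:ℝ) + ((n:ℝ)+1) + 1)
            * (((N:ℝ) + (F:ℝ) + (Nat.sqrt N : ℝ) + (S:ℝ) + ((n:ℝ)+1)))^n := by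
      calc (((n+1).factorial : ℕ) : ℝ) * (P:ℝ) * (((Nat.sqrt N : ℝ) + 1) * (cnt d N : ℝ))
          = (((n+1).factorial * P * ((Nat.sqrt N + 1) * cnt d N) : ℕ) : ℝ) := by
            push_cast; ring
        _ ≤ (((n+1) * (Nat.sqrt N + S + (n+1) + 1) * (N + F + Nat.sqrt N + S + (n+1))^n : ℕ) : ℝ) := by
            exact_mod_cast H
        _ = ((n:ℝ)+1) * ((Nat.sqrt N : ℝ) + (S:ℝ) + ((n:ℝ)+1) + 1)
            * (((N:ℝ) + (F:ℝ) + (Nat.sqrt N : ℝ) + (S:ℝ) + ((n:ℝ)+1)))^n := by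
            push_cast; ring
    rw [← key N]
    rw [div_le_iff₀ (by positivity : (0:ℝ) < (N:ℝ)^n)]
    have heq : c * (((Nat.sqrt N : ℝ) + ((S:ℝ) + n + 2))/((Nat.sqrt N : ℝ) + 1))
          * (((N:ℝ) + ((F:ℝ) + S + n + 1) + 1 * (Nat.sqrt N : ℝ))/(N:ℝ))^n * (N:ℝ)^n
        = (((n:ℝ)+1) * ((Nat.sqrt N : ℝ) + (S:ℝ) + ((n:ℝ)+1) + 1)
            * (((N:ℝ) + (F:ℝ) + (Nat.sqrt N : ℝ) + (S:ℝ) + ((n:ℝ)+1)))^n)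
          / ((((n+1).factorial : ℕ) : ℝ) * (P:ℝ) * ((Nat.sqrt N : ℝ) + 1)) := by
      rw [hc, hfacsucc]
      rw [div_pow]
      field_simp
      ring
    rw [heq, le_div_iff₀ (by rw [hfacsucc]; positivity)]
    calc (cnt d N : ℝ) * ((((n+1).factorial : ℕ) : ℝ) * (P:ℝ) * ((Nat.sqrt N : ℝ) + 1))
        = (((n+1).factorial : ℕ) : ℝ) * (P:ℝ) * (((Nat.sqrt N : ℝ) + 1) * (cnt d N : ℝ)) := by
          ring
      _ ≤ _ := Hr
end

section
/- Let q be a prime power and m, n ≥ 0 natural numbers. If v_1,...,v_{m+n} are independent uniformly distributed random vectors in 𝔽_q^m, then the probability that v_1,...,v_{m+n} do not span 𝔽_q^m is at most q^{-n}/(q − 1). -/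
open Finset

section helpers
variable {F : Type*} [Field F] {m k : ℕ}

/-- dot product functional -/
noncomputable def dotL [Fintype F] (w : Fin m → F) : (Fin m → F) →ₗ[F] F where
  toFun x := ∑ j, w j * x j
  map_add' x y := by simp [mul_add, Finset.sum_add_distrib]
  map_smul' c x := by simp [Finset.mul_sum, mul_left_comm]

omit [Field F] in
lemma dotL_aux : True := trivial

lemma dotL_surjective [Fintype F] (w : Fin m → F) (hw : w ≠ 0) :
    Function.Surjective (dotL w) := by
  obtain ⟨j0, hj0⟩ : ∃ j, w j ≠ 0 := by
    by_contra h; push_neg at h; exact hw (funext h)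
  intro c
  refine ⟨Pi.single j0 ((w j0)⁻¹ * c), ?_⟩
  simp only [dotL, LinearMap.coe_mk, AddHom.coe_mk]
  rw [Fintype.sum_eq_single j0 (fun j hj => by simp [Pi.single_eq_of_ne hj])]
  rw [Pi.single_eq_same]
  field_simp

lemma ker_card_mul [Fintype F] (w : Fin m → F) (hw : w ≠ 0) :
    Nat.card {x : Fin m → F // ∑ j, w j * x j = 0} * Fintype.card F
      = Fintype.card F ^ m := by
  classical
  set φ := (dotL w).toAddMonoidHom with hφ
  have hsurj : Function.Surjective φ := dotL_surjective w hw
  have e1 : (Fin m → F) ≃ ((Fin m → F) ⧸ φ.ker) × φ.ker :=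
    AddSubgroup.addGroupEquivQuotientProdAddSubgroup
  have e2 : ((Fin m → F) ⧸ φ.ker) ≃ F :=
    (QuotientAddGroup.quotientKerEquivOfSurjective φ hsurj).toEquiv
  have e3 : {x : Fin m → F // ∑ j, w j * x j = 0} ≃ φ.ker :=
    Equiv.subtypeEquivRight (fun x => by
      simp [hφ, AddMonoidHom.mem_ker, dotL])
  have h : Nat.card (Fin m → F) = Fintype.card F * Nat.card φ.ker := by
    rw [Nat.card_congr e1, Nat.card_prod, Nat.card_congr e2, Nat.card_eq_fintype_card]
  rw [Nat.card_congr e3, mul_comm, ← h]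
  simp [Nat.card_eq_fintype_card, Fintype.card_pi]

lemma exists_ann (v : Fin k → Fin m → F)
    (hv : Submodule.span F (Set.range v) ≠ ⊤) :
    ∃ w : Fin m → F, w ≠ 0 ∧ ∀ i, ∑ j, w j * v i j = 0 := by
  obtain ⟨f, hf0, hf⟩ := Submodule.exists_dual_map_eq_bot_of_lt_top
    (lt_top_iff_ne_top.mpr hv) inferInstance
  set e : Fin m → (Fin m → F) := fun j j' => if j = j' then 1 else 0 with he
  have key : ∀ x : Fin m → F, f x = ∑ j, x j * f (e j) := by
    intro x
    conv_lhs => rw [pi_eq_sum_univ x]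
    rw [map_sum]
    simp only [map_smul, smul_eq_mul]
    rfl
  refine ⟨fun j => f (e j), ?_, ?_⟩
  · intro h
    apply hf0
    refine LinearMap.ext fun x => ?_
    rw [LinearMap.zero_apply, key x]
    refine Finset.sum_eq_zero fun j _ => ?_
    rw [congrFun h j]; simp
  · intro i
    have hmem : v i ∈ Submodule.span F (Set.range v) :=
      Submodule.subset_span ⟨i, rfl⟩
    have h0 : f (v i) = 0 := by
      have := Submodule.mem_map_of_mem (f := f) hmem
      rw [hf] at this
      simpa using this
    rw [key (v i)] at h0
    rw [← h0]
    exact Finset.sum_congr rfl fun j _ => (mul_comm _ _)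

lemma card_ann_lower [Fintype F] (v : Fin k → Fin m → F)
    (hv : Submodule.span F (Set.range v) ≠ ⊤) :
    Fintype.card F - 1 ≤
      Nat.card {w : Fin m → F // w ≠ 0 ∧ ∀ i, ∑ j, w j * v i j = 0} := by
  classical
  obtain ⟨w0, hw0, hann⟩ := exists_ann v hv
  have hmap : ∀ u : Fˣ, ((u : F) • w0 ≠ 0 ∧ ∀ i, ∑ j, ((u : F) • w0) j * v i j = 0) := by
    intro u
    constructor
    · exact smul_ne_zero (Units.ne_zero u) hw0
    · intro i
      have h1 : ∑ j, ((u : F) * w0 j) * v i j = (u : F) * ∑ j, w0 j * v i j := by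
        rw [Finset.mul_sum]
        exact Finset.sum_congr rfl fun j _ => mul_assoc _ _ _
      simp only [Pi.smul_apply, smul_eq_mul]
      rw [h1, hann i, mul_zero]
  have hinj : Function.Injective
      (fun u : Fˣ => (⟨(u : F) • w0, hmap u⟩ :
        {w : Fin m → F // w ≠ 0 ∧ ∀ i, ∑ j, w j * v i j = 0})) := by
    intro u u' h
    have h2 : (u : F) • w0 = (u' : F) • w0 := congrArg Subtype.val h
    have := smul_left_injective F hw0 h2
    exact Units.ext this
  calc Fintype.card F - 1 = Nat.card Fˣ := by
        rw [Nat.card_eq_fintype_card, Fintype.card_units]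
    _ ≤ _ := Nat.card_le_card_of_injective _ hinj

end helpers

/-- If `v₁, …, v_{m+n}` are uniformly random vectors in `𝔽_q^m`, the probability
that they fail to span `𝔽_q^m` is at most `q^(-n) / (q - 1)`. -/
theorem stmt3 (F : Type*) [Field F] [Fintype F] (q : ℕ) (hq : Fintype.card F = q)
    (m n : ℕ) :
    (Nat.card {v : Fin (m + n) → (Fin m → F) //
        Submodule.span F (Set.range v) ≠ ⊤} : ℝ) /
      (Nat.card (Fin (m + n) → (Fin m → F)) : ℝ) ≤
      (q : ℝ) ^ (-(n : ℤ)) / ((q : ℝ) - 1) := by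
  classical
  have hq2 : 2 ≤ q := hq ▸ Fintype.one_lt_card
  have hq1R : (1 : ℝ) < q := by exact_mod_cast hq2
  have hq0R : (0 : ℝ) < q := by linarith
  rcases Nat.eq_zero_or_pos m with hm | hm
  · -- m = 0 : every tuple spans the trivial module
    subst hm
    have hall : ∀ v : Fin (0 + n) → (Fin 0 → F),
        Submodule.span F (Set.range v) = ⊤ :=
      fun v => Submodule.eq_top_iff'.mpr fun x => by
        rw [Subsingleton.elim x 0]; exact zero_mem _
    have he : IsEmpty {v : Fin (0 + n) → (Fin 0 → F) //
        Submodule.span F (Set.range v) ≠ ⊤} := ⟨fun ⟨v, hv⟩ => hv (hall v)⟩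
    rw [Nat.card_of_isEmpty]
    simp only [Nat.cast_zero, zero_div]
    apply div_nonneg
    · positivity
    · linarith
  · obtain ⟨m', rfl⟩ : ∃ m', m = m' + 1 := ⟨m - 1, by omega⟩
    set B : Finset (Fin (m' + 1 + n) → Fin (m' + 1) → F) :=
      univ.filter (fun v => Submodule.span F (Set.range v) ≠ ⊤) with hB
    set W : Finset (Fin (m' + 1) → F) := univ.filter (fun w => w ≠ 0) with hW
    have hper : ∀ v ∈ B, q - 1 ≤
        (W.filter (fun w => ∀ i, ∑ j, w j * v i j = 0)).card := by
      intro v hv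
      rw [hW, filter_filter]
      rw [← Fintype.card_subtype, ← Nat.card_eq_fintype_card]
      exact hq ▸ card_ann_lower v (by simpa [hB] using hv)
    have hKw : ∀ w ∈ W, ((univ : Finset (Fin (m' + 1 + n) → Fin (m' + 1) → F)).filter
        (fun v => ∀ i, ∑ j, w j * v i j = 0)).card = (q ^ m') ^ (m' + 1 + n) := by
      intro w hw
      have hwne : w ≠ 0 := by simpa [hW] using hw
      have hK : Nat.card {x : Fin (m' + 1) → F // ∑ j, w j * x j = 0} = q ^ m' := by
        have h := ker_card_mul w hwne
        rw [hq] at h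
        have hqpos : 0 < q := lt_of_lt_of_le (by norm_num) hq2
        refine Nat.eq_of_mul_eq_mul_right hqpos ?_
        rw [h]
        exact pow_succ q m'
      calc ((univ : Finset (Fin (m' + 1 + n) → Fin (m' + 1) → F)).filter
            (fun v => ∀ i, ∑ j, w j * v i j = 0)).card
          = Fintype.card {v : Fin (m' + 1 + n) → Fin (m' + 1) → F //
              ∀ i, ∑ j, w j * (v i) j = 0} := (Fintype.card_subtype _).symm
        _ = Fintype.card (Fin (m' + 1 + n) → {x : Fin (m' + 1) → F // ∑ j, w j * x j = 0}) :=
            Fintype.card_congr (Equiv.subtypePiEquivPi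
              (p := fun (_ : Fin (m' + 1 + n)) (x : Fin (m' + 1) → F) => ∑ j, w j * x j = 0))
        _ = Fintype.card {x : Fin (m' + 1) → F // ∑ j, w j * x j = 0} ^ (m' + 1 + n) := by
            rw [Fintype.card_fun]; simp
        _ = (q ^ m') ^ (m' + 1 + n) := by rw [← Nat.card_eq_fintype_card, hK]
    have key : (q - 1) * B.card ≤ q ^ (m' + 1 + m' * (m' + 1 + n)) := by
      have step : (q - 1) * B.card ≤ q ^ (m' + 1) * (q ^ m') ^ (m' + 1 + n) := by
        calc (q - 1) * B.card = ∑ _v ∈ B, (q - 1) := by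
              rw [Finset.sum_const, smul_eq_mul, mul_comm]
          _ ≤ ∑ v ∈ B, (W.filter (fun w => ∀ i, ∑ j, w j * v i j = 0)).card :=
              Finset.sum_le_sum hper
          _ = ∑ w ∈ W, (B.filter (fun v => ∀ i, ∑ j, w j * v i j = 0)).card := by
              simp_rw [Finset.card_filter]; exact Finset.sum_comm
          _ ≤ ∑ w ∈ W, ((univ : Finset (Fin (m' + 1 + n) → Fin (m' + 1) → F)).filter
                (fun v => ∀ i, ∑ j, w j * v i j = 0)).card :=
              Finset.sum_le_sum (fun w _ => Finset.card_le_card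
                (Finset.filter_subset_filter _ (subset_univ B)))
          _ = ∑ _w ∈ W, (q ^ m') ^ (m' + 1 + n) := Finset.sum_congr rfl hKw
          _ = W.card * (q ^ m') ^ (m' + 1 + n) := by rw [Finset.sum_const, smul_eq_mul]
          _ ≤ q ^ (m' + 1) * (q ^ m') ^ (m' + 1 + n) := by
              apply Nat.mul_le_mul_right
              calc W.card ≤ (univ : Finset (Fin (m' + 1) → F)).card :=
                    Finset.card_filter_le _ _
                _ = q ^ (m' + 1) := by simp [card_univ, Fintype.card_fun, hq]
      calc (q - 1) * B.card ≤ q ^ (m' + 1) * (q ^ m') ^ (m' + 1 + n) := step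
        _ = q ^ (m' + 1 + m' * (m' + 1 + n)) := by rw [← pow_mul, ← pow_add]
    have hnum : Nat.card {v : Fin (m' + 1 + n) → Fin (m' + 1) → F //
        Submodule.span F (Set.range v) ≠ ⊤} = B.card := by
      rw [Nat.card_eq_fintype_card, Fintype.card_subtype]
    have hden : Nat.card (Fin (m' + 1 + n) → Fin (m' + 1) → F)
        = (q ^ (m' + 1)) ^ (m' + 1 + n) := by
      rw [Nat.card_eq_fintype_card]
      simp [Fintype.card_fun, hq]
    rw [hnum, hden]
    have hc : ((q - 1 : ℕ) : ℝ) = (q : ℝ) - 1 := by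
      rw [Nat.cast_sub (by omega)]; norm_num
    have keyR : ((q : ℝ) - 1) * B.card ≤ (q : ℝ) ^ (m' + 1 + m' * (m' + 1 + n)) := by
      calc ((q : ℝ) - 1) * B.card = ((q - 1 : ℕ) : ℝ) * B.card := by rw [hc]
        _ ≤ (q : ℝ) ^ (m' + 1 + m' * (m' + 1 + n)) := by exact_mod_cast key
    have hcast2 : ((((q ^ (m' + 1)) ^ (m' + 1 + n) : ℕ)) : ℝ)
        = ((q : ℝ) ^ (m' + 1)) ^ (m' + 1 + n) := by push_cast; ring
    rw [hcast2, div_le_div_iff₀ (by positivity) (by linarith)]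
    have hexp : ((q : ℝ) ^ (m' + 1)) ^ (m' + 1 + n)
        = (q : ℝ) ^ (m' + 1 + m' * (m' + 1 + n)) * (q : ℝ) ^ n := by
      rw [← pow_mul, ← pow_add]
      congr 1
      ring
    have hone : (q : ℝ) ^ (-(n : ℤ)) * (q : ℝ) ^ (n : ℕ) = 1 := by
      rw [← zpow_natCast (q : ℝ) n, ← zpow_add₀ (ne_of_gt hq0R)]
      simp
    have hr : (q : ℝ) ^ (-(n : ℤ)) *
        ((q : ℝ) ^ (m' + 1 + m' * (m' + 1 + n)) * (q : ℝ) ^ n)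
        = (q : ℝ) ^ (m' + 1 + m' * (m' + 1 + n)) := by
      rw [mul_comm ((q : ℝ) ^ (m' + 1 + m' * (m' + 1 + n))) _, ← mul_assoc, hone, one_mul]
    rw [hexp, hr, mul_comm]
    exact keyR
end
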